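/- In the setting of the previous statement with σ_1² > σ_2² and σ_1² − σ_2² > v², let X_1,...,X_m be i.i.d. copies of X and Y_1,...,Y_n i.i.d. copies of Y (all independent, with all pairwise coordinate fourth moments finite). Then with probability tending to 1 as d → ∞, every within-Y distance is smaller than every between-sample distance, which in turn is smaller than every within-X distance: max_{j≠j'} ‖Y_j − Y_{j'}‖² < min_{i,j} ‖X_i − Y_j‖² and max_{i,j} ‖X_i − Y_j‖² < min_{i≠i'} ‖X_i − X_{i'}‖². -/

import Mathlib

open MeasureTheory ProbabilityTheory Filter

lemma aux_int_sq (ν ν' : Measure ℝ) [IsProbabilityMeasure ν] [IsProbabilityMeasure ν']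
    (h2 : MemLp id 2 ν) (h2' : MemLp id 2 ν') (μa μb σa σb : ℝ)
    (hma : ∫ x, x ∂ν = μa) (hva : ∫ x, (x - μa) ^ 2 ∂ν = σa ^ 2)
    (hmb : ∫ x, x ∂ν' = μb) (hvb : ∫ x, (x - μb) ^ 2 ∂ν' = σb ^ 2) :
    Integrable (fun p : ℝ × ℝ => (p.1 - p.2) ^ 2) (ν.prod ν') ∧
    ∫ p : ℝ × ℝ, (p.1 - p.2) ^ 2 ∂(ν.prod ν') = σa ^ 2 + σb ^ 2 + (μa - μb) ^ 2 := by
  have hia : Integrable (fun x : ℝ => x) ν := by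
    exact h2.integrable one_le_two
  have hib : Integrable (fun x : ℝ => x) ν' := by
    exact h2'.integrable one_le_two
  have hsa : Integrable (fun x => x ^ 2) ν := by simpa using h2.integrable_sq
  have hsb : Integrable (fun x => x ^ 2) ν' := by simpa using h2'.integrable_sq
  -- second moments
  have hva' : ∫ x, x ^ 2 ∂ν = σa ^ 2 + μa ^ 2 := by
    have : ∫ x, (x - μa) ^ 2 ∂ν = ∫ x, x ^ 2 ∂ν - 2 * μa * ∫ x, x ∂ν + μa ^ 2 := by
      have h1 : Integrable (fun x => x ^ 2 - 2 * μa * x) ν := hsa.sub (hia.const_mul _)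
      calc ∫ x, (x - μa) ^ 2 ∂ν = ∫ x, (x ^ 2 - 2 * μa * x) + μa ^ 2 ∂ν := by
            congr 1; ext x; ring
        _ = ∫ x, x ^ 2 - 2 * μa * x ∂ν + ∫ _, μa ^ 2 ∂ν := integral_add h1 (integrable_const _)
        _ = (∫ x, x ^ 2 ∂ν - 2 * μa * ∫ x, x ∂ν) + μa ^ 2 := by
            rw [integral_sub hsa (hia.const_mul _), integral_const_mul, integral_const]
            simp
    rw [this, hma] at hva; linarith
  have hvb' : ∫ x, x ^ 2 ∂ν' = σb ^ 2 + μb ^ 2 := by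
    have : ∫ x, (x - μb) ^ 2 ∂ν' = ∫ x, x ^ 2 ∂ν' - 2 * μb * ∫ x, x ∂ν' + μb ^ 2 := by
      have h1 : Integrable (fun x => x ^ 2 - 2 * μb * x) ν' := hsb.sub (hib.const_mul _)
      calc ∫ x, (x - μb) ^ 2 ∂ν' = ∫ x, (x ^ 2 - 2 * μb * x) + μb ^ 2 ∂ν' := by
            congr 1; ext x; ring
        _ = ∫ x, x ^ 2 - 2 * μb * x ∂ν' + ∫ _, μb ^ 2 ∂ν' := integral_add h1 (integrable_const _)
        _ = (∫ x, x ^ 2 ∂ν' - 2 * μb * ∫ x, x ∂ν') + μb ^ 2 := by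
            rw [integral_sub hsb (hib.const_mul _), integral_const_mul, integral_const]
            simp
    rw [this, hmb] at hvb; linarith
  have i1 : Integrable (fun p : ℝ × ℝ => p.1 ^ 2 * 1) (ν.prod ν') :=
    hsa.mul_prod (integrable_const 1)
  have i2 : Integrable (fun p : ℝ × ℝ => (1:ℝ) * p.2 ^ 2) (ν.prod ν') :=
    (integrable_const 1).mul_prod hsb
  have i3 : Integrable (fun p : ℝ × ℝ => p.1 * p.2) (ν.prod ν') := hia.mul_prod hib
  have i12 : Integrable (fun p : ℝ × ℝ => p.1 ^ 2 * 1 + 1 * p.2 ^ 2) (ν.prod ν') := i1.add i2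
  have hi : Integrable (fun p : ℝ × ℝ => (p.1 - p.2) ^ 2) (ν.prod ν') := by
    have : (fun p : ℝ × ℝ => (p.1 - p.2) ^ 2)
        = fun p => (p.1 ^ 2 * 1 + 1 * p.2 ^ 2) - 2 * (p.1 * p.2) := by ext p; ring
    rw [this]
    exact i12.sub (i3.const_mul 2)
  refine ⟨hi, ?_⟩
  have : ∫ p : ℝ × ℝ, (p.1 - p.2) ^ 2 ∂(ν.prod ν')
      = ∫ p : ℝ × ℝ, (p.1 ^ 2 * 1 + 1 * p.2 ^ 2) - 2 * (p.1 * p.2) ∂(ν.prod ν') := by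
    congr 1; ext p; ring
  have e1 : ∫ p : ℝ × ℝ, p.1 ^ 2 * 1 ∂(ν.prod ν') = σa ^ 2 + μa ^ 2 := by
    rw [integral_prod_mul (fun x : ℝ => x ^ 2) (fun _ : ℝ => (1:ℝ))]
    simp [hva']
  have e2 : ∫ p : ℝ × ℝ, 1 * p.2 ^ 2 ∂(ν.prod ν') = σb ^ 2 + μb ^ 2 := by
    rw [integral_prod_mul (fun _ : ℝ => (1:ℝ)) (fun x : ℝ => x ^ 2)]
    simp [hvb']
  have e3 : ∫ p : ℝ × ℝ, p.1 * p.2 ∂(ν.prod ν') = μa * μb := by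
    rw [integral_prod_mul (fun x : ℝ => x) (fun x : ℝ => x), hma, hmb]
  rw [this, integral_sub i12 (i3.const_mul 2), integral_add i1 i2, e1, e2, integral_const_mul, e3]
  ring

lemma aux_slln {Ω : Type*} [MeasureSpace Ω] [IsProbabilityMeasure (ℙ : Measure Ω)]
    (A B : ℕ → Ω → ℝ) (νA νB : Measure ℝ) (μa μb σa σb : ℝ)
    (hmA : ∀ k, Measurable (A k)) (hmB : ∀ k, Measurable (B k))
    (hAB : ∀ k, IndepFun (A k) (B k) ℙ)
    (hpp : ∀ k l, k ≠ l → IndepFun (fun ω => (A k ω, B k ω)) (fun ω => (A l ω, B l ω)) ℙ)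
    (hidA : ∀ k, Measure.map (A k) ℙ = νA) (hidB : ∀ k, Measure.map (B k) ℙ = νB)
    (hma : ∫ x, x ∂νA = μa) (hva : ∫ x, (x - μa) ^ 2 ∂νA = σa ^ 2)
    (hmb : ∫ x, x ∂νB = μb) (hvb : ∫ x, (x - μb) ^ 2 ∂νB = σb ^ 2)
    (h2A : MemLp id 2 νA) (h2B : MemLp id 2 νB) :
    ∀ᵐ ω, Tendsto (fun d : ℕ => (∑ k ∈ Finset.range d, (A k ω - B k ω) ^ 2) / d)
      atTop (nhds (σa ^ 2 + σb ^ 2 + (μa - μb) ^ 2)) := by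
  haveI : IsProbabilityMeasure νA := by
    rw [← hidA 0]; exact Measure.isProbabilityMeasure_map (hmA 0).aemeasurable
  haveI : IsProbabilityMeasure νB := by
    rw [← hidB 0]; exact Measure.isProbabilityMeasure_map (hmB 0).aemeasurable
  set g : ℝ × ℝ → ℝ := fun p => (p.1 - p.2) ^ 2 with hgdef
  have hg : Measurable g := by fun_prop
  set Z : ℕ → Ω → ℝ := fun k ω => (A k ω - B k ω) ^ 2 with hZdef
  have hpm : ∀ k, Measurable (fun ω => (A k ω, B k ω)) := fun k => (hmA k).prodMk (hmB k)
  have hmap : ∀ k, Measure.map (fun ω => (A k ω, B k ω)) ℙ = νA.prod νB := fun k => by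
    rw [(indepFun_iff_map_prod_eq_prod_map_map (hmA k).aemeasurable
      (hmB k).aemeasurable).mp (hAB k), hidA, hidB]
  have haux := aux_int_sq νA νB h2A h2B μa μb σa σb hma hva hmb hvb
  have hident : ∀ k, IdentDistrib (Z k) (Z 0) ℙ ℙ := fun k => by
    have : IdentDistrib (fun ω => (A k ω, B k ω)) (fun ω => (A 0 ω, B 0 ω)) ℙ ℙ :=
      ⟨(hpm k).aemeasurable, (hpm 0).aemeasurable, by rw [hmap, hmap]⟩
    exact this.comp hg
  have hint : Integrable (Z 0) ℙ := by
    have := (integrable_map_measure (μ := (ℙ : Measure Ω)) (f := fun ω => (A 0 ω, B 0 ω))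
      (g := g) (by rw [hmap 0]; exact hg.aestronglyMeasurable) (hpm 0).aemeasurable).mp
      (by rw [hmap 0]; exact haux.1)
    exact this
  have hpair : Pairwise (Function.onFun (IndepFun · · (ℙ : Measure Ω)) Z) := fun k l h =>
    (hpp k l h).comp hg hg
  have hmean : (ℙ : Measure Ω)[Z 0] = σa ^ 2 + σb ^ 2 + (μa - μb) ^ 2 := by
    have : ∫ ω, Z 0 ω ∂ℙ = ∫ p : ℝ × ℝ, g p ∂(νA.prod νB) := by
      rw [← hmap 0, integral_map (hpm 0).aemeasurable
        (by rw [hmap 0]; exact hg.aestronglyMeasurable)]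
    rw [this]; exact haux.2
  have := strong_law_ae_real Z hint hpair hident
  rw [hmean] at this
  exact this

/-- High-dimensional separation of distances: with `X_1,...,X_m` i.i.d. with i.i.d.
coordinates of law `νX` (mean `μ₁`, variance `σ₁²`) and `Y_1,...,Y_n` i.i.d. with i.i.d.
coordinates of law `νY` (mean `μ₂`, variance `σ₂²`), all coordinates jointly independent,
finite fourth moments, and `σ₁² > σ₂²`, `σ₁² − σ₂² > v² = (μ₁−μ₂)²`, the probability that
every within-Y squared distance is smaller than every between-sample squared distance and
every between-sample squared distance is smaller than every within-X squared distance
tends to 1 as the dimension `d → ∞`. -/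
theorem distance_ordering_high_dim (m n : ℕ)
    {Ω : Type*} [MeasureSpace Ω] [IsProbabilityMeasure (ℙ : Measure Ω)]
    (X : Fin m → ℕ → Ω → ℝ) (Y : Fin n → ℕ → Ω → ℝ)
    (νX νY : Measure ℝ) (μ₁ μ₂ σ₁ σ₂ : ℝ)
    (hmX : ∀ i k, Measurable (X i k)) (hmY : ∀ j k, Measurable (Y j k))
    (hindep : iIndepFun
      (fun p : (Fin m ⊕ Fin n) × ℕ =>
        Sum.elim (fun i => X i p.2) (fun j => Y j p.2) p.1) ℙ)
    (hidX : ∀ i k, Measure.map (X i k) ℙ = νX)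
    (hidY : ∀ j k, Measure.map (Y j k) ℙ = νY)
    (hmean₁ : ∫ x, x ∂νX = μ₁) (hvar₁ : ∫ x, (x - μ₁) ^ 2 ∂νX = σ₁ ^ 2)
    (hmean₂ : ∫ x, x ∂νY = μ₂) (hvar₂ : ∫ x, (x - μ₂) ^ 2 ∂νY = σ₂ ^ 2)
    (hmom4X : MemLp id 4 νX) (hmom4Y : MemLp id 4 νY)
    (hσ : σ₂ ^ 2 < σ₁ ^ 2) (hv : (μ₁ - μ₂) ^ 2 < σ₁ ^ 2 - σ₂ ^ 2) :
    Tendsto (fun d : ℕ =>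
        (ℙ : Measure Ω) {ω |
          (∀ (j j' : Fin n), j ≠ j' → ∀ (i : Fin m) (j'' : Fin n),
            ∑ k ∈ Finset.range d, (Y j k ω - Y j' k ω) ^ 2
              < ∑ k ∈ Finset.range d, (X i k ω - Y j'' k ω) ^ 2)
          ∧ (∀ (i i' : Fin m), i ≠ i' → ∀ (i'' : Fin m) (j : Fin n),
            ∑ k ∈ Finset.range d, (X i'' k ω - Y j k ω) ^ 2
              < ∑ k ∈ Finset.range d, (X i k ω - X i' k ω) ^ 2)})
      atTop (nhds 1) := by
  
  classical
  set f : (Fin m ⊕ Fin n) × ℕ → Ω → ℝ :=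
    fun p => Sum.elim (fun i => X i p.2) (fun j => Y j p.2) p.1 with hfdef
  have hfm : ∀ p, Measurable (f p) := by
    rintro ⟨a | a, k⟩
    · exact hmX a k
    · exact hmY a k
  -- the three limit constants
  set c₁ : ℝ := σ₂ ^ 2 + σ₂ ^ 2 + (μ₂ - μ₂) ^ 2 with hc₁
  set c₂ : ℝ := σ₁ ^ 2 + σ₂ ^ 2 + (μ₁ - μ₂) ^ 2 with hc₂
  set c₃ : ℝ := σ₁ ^ 2 + σ₁ ^ 2 + (μ₁ - μ₁) ^ 2 with hc₃
  have hc12 : c₁ < c₂ := by nlinarith [sq_nonneg (μ₁ - μ₂)]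
  have hc23 : c₂ < c₃ := by nlinarith
  set t₁ : ℝ := (c₁ + c₂) / 2 with ht₁
  set t₂ : ℝ := (c₂ + c₃) / 2 with ht₂
  have hc1t1 : c₁ < t₁ := by rw [ht₁]; linarith
  have ht1c2 : t₁ < c₂ := by rw [ht₁]; linarith
  have hc2t2 : c₂ < t₂ := by rw [ht₂]; linarith
  have ht2c3 : t₂ < c₃ := by rw [ht₂]; linarith
  -- a.e. convergence statements
  have hYY : ∀ᵐ ω ∂(ℙ : Measure Ω), ∀ (j j' : Fin n), j ≠ j' →
      Tendsto (fun d : ℕ => (∑ k ∈ Finset.range d, (Y j k ω - Y j' k ω) ^ 2) / d)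
        atTop (nhds c₁) := by
    rw [ae_all_iff]; intro j; rw [ae_all_iff]; intro j'
    by_cases h : j = j'
    · exact Filter.Eventually.of_forall fun ω h' => absurd h h'
    · haveI : IsProbabilityMeasure νY := by
        rw [← hidY j 0]; exact Measure.isProbabilityMeasure_map (hmY j 0).aemeasurable
      have h2Y : MemLp id 2 νY := hmom4Y.mono_exponent (by norm_num)
      filter_upwards [aux_slln (Y j) (Y j') νY νY μ₂ μ₂ σ₂ σ₂ (hmY j) (hmY j')
        (fun k => hindep.indepFun (show ((Sum.inr j, k) : (Fin m ⊕ Fin n) × ℕ)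
          ≠ (Sum.inr j', k) by simp [h]))
        (fun k l hkl => hindep.indepFun_prodMk_prodMk hfm
          (Sum.inr j, k) (Sum.inr j', k) (Sum.inr j, l) (Sum.inr j', l)
          (by simp [hkl]) (by simp [hkl]) (by simp [hkl]) (by simp [hkl]))
        (hidY j) (hidY j') hmean₂ hvar₂ hmean₂ hvar₂ h2Y h2Y] with ω hω _
      exact hω
  have hXY : ∀ᵐ ω ∂(ℙ : Measure Ω), ∀ (i : Fin m) (j : Fin n),
      Tendsto (fun d : ℕ => (∑ k ∈ Finset.range d, (X i k ω - Y j k ω) ^ 2) / d)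
        atTop (nhds c₂) := by
    rw [ae_all_iff]; intro i; rw [ae_all_iff]; intro j
    haveI : IsProbabilityMeasure νX := by
      rw [← hidX i 0]; exact Measure.isProbabilityMeasure_map (hmX i 0).aemeasurable
    haveI : IsProbabilityMeasure νY := by
      rw [← hidY j 0]; exact Measure.isProbabilityMeasure_map (hmY j 0).aemeasurable
    have h2X : MemLp id 2 νX := hmom4X.mono_exponent (by norm_num)
    have h2Y : MemLp id 2 νY := hmom4Y.mono_exponent (by norm_num)
    exact aux_slln (X i) (Y j) νX νY μ₁ μ₂ σ₁ σ₂ (hmX i) (hmY j)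
      (fun k => hindep.indepFun (show ((Sum.inl i, k) : (Fin m ⊕ Fin n) × ℕ)
        ≠ (Sum.inr j, k) by simp))
      (fun k l hkl => hindep.indepFun_prodMk_prodMk hfm
        (Sum.inl i, k) (Sum.inr j, k) (Sum.inl i, l) (Sum.inr j, l)
        (by simp [hkl]) (by simp) (by simp) (by simp [hkl]))
      (hidX i) (hidY j) hmean₁ hvar₁ hmean₂ hvar₂ h2X h2Y
  have hXX : ∀ᵐ ω ∂(ℙ : Measure Ω), ∀ (i i' : Fin m), i ≠ i' →
      Tendsto (fun d : ℕ => (∑ k ∈ Finset.range d, (X i k ω - X i' k ω) ^ 2) / d)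
        atTop (nhds c₃) := by
    rw [ae_all_iff]; intro i; rw [ae_all_iff]; intro i'
    by_cases h : i = i'
    · exact Filter.Eventually.of_forall fun ω h' => absurd h h'
    · haveI : IsProbabilityMeasure νX := by
        rw [← hidX i 0]; exact Measure.isProbabilityMeasure_map (hmX i 0).aemeasurable
      have h2X : MemLp id 2 νX := hmom4X.mono_exponent (by norm_num)
      filter_upwards [aux_slln (X i) (X i') νX νX μ₁ μ₁ σ₁ σ₁ (hmX i) (hmX i')
        (fun k => hindep.indepFun (show ((Sum.inl i, k) : (Fin m ⊕ Fin n) × ℕ)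
          ≠ (Sum.inl i', k) by simp [h]))
        (fun k l hkl => hindep.indepFun_prodMk_prodMk hfm
          (Sum.inl i, k) (Sum.inl i', k) (Sum.inl i, l) (Sum.inl i', l)
          (by simp [hkl]) (by simp [hkl]) (by simp [hkl]) (by simp [hkl]))
        (hidX i) (hidX i') hmean₁ hvar₁ hmean₁ hvar₁ h2X h2X] with ω hω _
      exact hω
  -- a.e., eventually the event holds
  have key : ∀ᵐ ω ∂(ℙ : Measure Ω), ∀ᶠ d in atTop,
      (∀ (j j' : Fin n), j ≠ j' → ∀ (i : Fin m) (j'' : Fin n),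
        ∑ k ∈ Finset.range d, (Y j k ω - Y j' k ω) ^ 2
          < ∑ k ∈ Finset.range d, (X i k ω - Y j'' k ω) ^ 2)
      ∧ (∀ (i i' : Fin m), i ≠ i' → ∀ (i'' : Fin m) (j : Fin n),
        ∑ k ∈ Finset.range d, (X i'' k ω - Y j k ω) ^ 2
          < ∑ k ∈ Finset.range d, (X i k ω - X i' k ω) ^ 2) := by
    filter_upwards [hYY, hXY, hXX] with ω h1 h2 h3
    have E0 : ∀ᶠ d : ℕ in atTop, 1 ≤ d := eventually_ge_atTop 1
    have E1 : ∀ᶠ d : ℕ in atTop, ∀ (j j' : Fin n), j ≠ j' →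
        (∑ k ∈ Finset.range d, (Y j k ω - Y j' k ω) ^ 2) / d < t₁ := by
      rw [eventually_all]; intro j; rw [eventually_all]; intro j'
      by_cases h : j = j'
      · exact Filter.Eventually.of_forall fun d h' => absurd h h'
      · exact ((h1 j j' h).eventually_lt_const hc1t1).mono fun d hd _ => hd
    have E2a : ∀ᶠ d : ℕ in atTop, ∀ (i : Fin m) (j : Fin n),
        t₁ < (∑ k ∈ Finset.range d, (X i k ω - Y j k ω) ^ 2) / d := by
      rw [eventually_all]; intro i; rw [eventually_all]; intro j
      exact (h2 i j).eventually_const_lt ht1c2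
    have E2b : ∀ᶠ d : ℕ in atTop, ∀ (i : Fin m) (j : Fin n),
        (∑ k ∈ Finset.range d, (X i k ω - Y j k ω) ^ 2) / d < t₂ := by
      rw [eventually_all]; intro i; rw [eventually_all]; intro j
      exact (h2 i j).eventually_lt_const hc2t2
    have E3 : ∀ᶠ d : ℕ in atTop, ∀ (i i' : Fin m), i ≠ i' →
        t₂ < (∑ k ∈ Finset.range d, (X i k ω - X i' k ω) ^ 2) / d := by
      rw [eventually_all]; intro i; rw [eventually_all]; intro i'
      by_cases h : i = i'
      · exact Filter.Eventually.of_forall fun d h' => absurd h h'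
      · exact ((h3 i i' h).eventually_const_lt ht2c3).mono fun d hd _ => hd
    filter_upwards [E0, E1, E2a, E2b, E3] with d hd hE1 hE2a hE2b hE3
    have hd0 : (0 : ℝ) < (d : ℝ) := by exact_mod_cast hd
    constructor
    · intro j j' hne i j''
      have := lt_trans (hE1 j j' hne) (hE2a i j'')
      exact (div_lt_div_iff_of_pos_right hd0).mp this
    · intro i i' hne i'' j
      have := lt_trans (hE2b i'' j) (hE3 i i' hne)
      exact (div_lt_div_iff_of_pos_right hd0).mp this
  -- measurability of the events
  have hmeas : ∀ d : ℕ, MeasurableSet {ω : Ω |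
      (∀ (j j' : Fin n), j ≠ j' → ∀ (i : Fin m) (j'' : Fin n),
        ∑ k ∈ Finset.range d, (Y j k ω - Y j' k ω) ^ 2
          < ∑ k ∈ Finset.range d, (X i k ω - Y j'' k ω) ^ 2)
      ∧ (∀ (i i' : Fin m), i ≠ i' → ∀ (i'' : Fin m) (j : Fin n),
        ∑ k ∈ Finset.range d, (X i'' k ω - Y j k ω) ^ 2
          < ∑ k ∈ Finset.range d, (X i k ω - X i' k ω) ^ 2)} := by
    intro d
    have hs1 : ∀ (j j' : Fin n), Measurable
        (fun ω => ∑ k ∈ Finset.range d, (Y j k ω - Y j' k ω) ^ 2) := fun j j' =>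
      Finset.measurable_sum _ fun k _ => ((hmY j k).sub (hmY j' k)).pow_const 2
    have hs2 : ∀ (i : Fin m) (j : Fin n), Measurable
        (fun ω => ∑ k ∈ Finset.range d, (X i k ω - Y j k ω) ^ 2) := fun i j =>
      Finset.measurable_sum _ fun k _ => ((hmX i k).sub (hmY j k)).pow_const 2
    have hs3 : ∀ (i i' : Fin m), Measurable
        (fun ω => ∑ k ∈ Finset.range d, (X i k ω - X i' k ω) ^ 2) := fun i i' =>
      Finset.measurable_sum _ fun k _ => ((hmX i k).sub (hmX i' k)).pow_const 2
    rw [Set.setOf_and]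
    refine MeasurableSet.inter ?_ ?_
    · simp only [Set.setOf_forall]
      exact MeasurableSet.iInter fun j => MeasurableSet.iInter fun j' =>
        MeasurableSet.iInter fun _ => MeasurableSet.iInter fun i =>
        MeasurableSet.iInter fun j'' => measurableSet_lt (hs1 j j') (hs2 i j'')
    · simp only [Set.setOf_forall]
      exact MeasurableSet.iInter fun i => MeasurableSet.iInter fun i' =>
        MeasurableSet.iInter fun _ => MeasurableSet.iInter fun i'' =>
        MeasurableSet.iInter fun j => measurableSet_lt (hs2 i'' j) (hs3 i i')
  have h_lim : ∀ᵐ ω ∂(ℙ : Measure Ω), ∀ᶠ d : ℕ in atTop,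
      ω ∈ {ω : Ω |
      (∀ (j j' : Fin n), j ≠ j' → ∀ (i : Fin m) (j'' : Fin n),
        ∑ k ∈ Finset.range d, (Y j k ω - Y j' k ω) ^ 2
          < ∑ k ∈ Finset.range d, (X i k ω - Y j'' k ω) ^ 2)
      ∧ (∀ (i i' : Fin m), i ≠ i' → ∀ (i'' : Fin m) (j : Fin n),
        ∑ k ∈ Finset.range d, (X i'' k ω - Y j k ω) ^ 2
          < ∑ k ∈ Finset.range d, (X i k ω - X i' k ω) ^ 2)} ↔ ω ∈ (Set.univ : Set Ω) := by
    filter_upwards [key] with ω hω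
    filter_upwards [hω] with d hd
    simpa using hd
  have := tendsto_measure_of_ae_tendsto_indicator_of_isFiniteMeasure atTop
    MeasurableSet.univ hmeas h_lim
  simpa using this
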